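/- There exists a constant C > 0 such that if p > C·√(ln n)/n, then with high probability the following holds for G = G³(n,p): for every F₅-free subhypergraph H of G, every balanced 3-partition π = (V₁,V₂,V₃) of [n] maximizing |H_π|, and every edge x₁x₂ of J not belonging to Q(π), there are at least p²·n²/12 pairs (y,z) with y ∈ V₂, z ∈ V₃ such that {x₁,x₂,y,z} spans an F̂₅. -/

import Mathlib

open Finset MeasureTheory Filter

attribute [local instance] Classical.propDecidable

set_option maxHeartbeats 1000000

/-- A potential hyperedge: a 3-element subset of the vertex set `Fin n`. -/
abbrev Edge (n : ℕ) := {e : Finset (Fin n) // e.card = 3}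

/-- Bernoulli measure on `Bool` with parameter `p`. -/
noncomputable def bern (p : ℝ) : Measure Bool :=
  (Real.toNNReal p) • Measure.dirac true + (Real.toNNReal (1 - p)) • Measure.dirac false

/-- The law of the random 3-uniform hypergraph `G³(n,p)`: each triple is present
independently with probability `p`. A sample point `ω : Edge n → Bool` records which
triples are hyperedges. -/
noncomputable def hypM (n : ℕ) (p : ℝ) : Measure (Edge n → Bool) :=
  Measure.pi fun _ => bern p

/-- The set of hyperedges of the sampled hypergraph. -/
noncomputable def hedges {n : ℕ} (ω : Edge n → Bool) : Finset (Edge n) :=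
  Finset.univ.filter fun e => ω e = true

/-- The triple `s` is a hyperedge of the hypergraph `H`. -/
def memH {n : ℕ} (H : Finset (Edge n)) (s : Finset (Fin n)) : Prop :=
  ∃ e ∈ H, (e : Finset (Fin n)) = s

/-- `H` contains no copy of `F₅`, the hypergraph on `{1,...,5}` with edges
`{123, 124, 345}`. -/
def F5Free {n : ℕ} (H : Finset (Edge n)) : Prop :=
  ¬ ∃ f : Fin 5 → Fin n, Function.Injective f ∧
      memH H {f 0, f 1, f 2} ∧ memH H {f 0, f 1, f 3} ∧ memH H {f 2, f 3, f 4}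

/-- `H` is tripartite: the vertex set can be partitioned into three parts such that
every hyperedge has exactly one vertex in each part. -/
def Tripartite {n : ℕ} (H : Finset (Edge n)) : Prop :=
  ∃ V : Fin 3 → Finset (Fin n),
    (∀ v : Fin n, ∃! i : Fin 3, v ∈ V i) ∧
    ∀ e ∈ H, ∀ i : Fin 3, ((e : Finset (Fin n)) ∩ V i).card = 1

/-- `(V₁, V₂, V₃)` is a 3-partition of the vertex set. -/
def IsPartition3 {n : ℕ} (V₁ V₂ V₃ : Finset (Fin n)) : Prop :=
  Disjoint V₁ V₂ ∧ Disjoint V₁ V₃ ∧ Disjoint V₂ V₃ ∧ V₁ ∪ V₂ ∪ V₃ = Finset.univ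

/-- A balanced 3-partition: every part has size `(1 ± 10⁻¹⁰) n / 3`. -/
def Balanced3 {n : ℕ} (V₁ V₂ V₃ : Finset (Fin n)) : Prop :=
  IsPartition3 V₁ V₂ V₃ ∧
    ∀ V ∈ [V₁, V₂, V₃],
      (1 - 1e-10 : ℝ) * n / 3 ≤ (V.card : ℝ) ∧ (V.card : ℝ) ≤ (1 + 1e-10 : ℝ) * n / 3

/-- The crossing hyperedges of `H` w.r.t. `(V₁,V₂,V₃)`: those with exactly one vertex
in each part (i.e. `H ∩ K_π`). -/
noncomputable def crossing {n : ℕ} (V₁ V₂ V₃ : Finset (Fin n)) (H : Finset (Edge n)) :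
    Finset (Edge n) :=
  H.filter fun e => ((e : Finset (Fin n)) ∩ V₁).card = 1 ∧
    ((e : Finset (Fin n)) ∩ V₂).card = 1 ∧ ((e : Finset (Fin n)) ∩ V₃).card = 1

/-- The missing crossing hyperedges `H̄_π = G_π \ H_π`. -/
noncomputable def Hbar {n : ℕ} (ω : Edge n → Bool) (V₁ V₂ V₃ : Finset (Fin n))
    (H : Finset (Edge n)) : Finset (Edge n) :=
  crossing V₁ V₂ V₃ (hedges ω) \ crossing V₁ V₂ V₃ H

/-- `H_i`: the hyperedges of `H` with at least two vertices in the part `V`. -/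
noncomputable def bigPart {n : ℕ} (V : Finset (Fin n)) (H : Finset (Edge n)) :
    Finset (Edge n) :=
  H.filter fun e => 2 ≤ ((e : Finset (Fin n)) ∩ V).card

/-- `(V₁,V₂,V₃)` is a 3-partition maximizing the number `|H_π|` of crossing
hyperedges of `H`. -/
def MaximizesCrossing {n : ℕ} (H : Finset (Edge n)) (V₁ V₂ V₃ : Finset (Fin n)) : Prop :=
  IsPartition3 V₁ V₂ V₃ ∧ ∀ W₁ W₂ W₃ : Finset (Fin n), IsPartition3 W₁ W₂ W₃ →
    (crossing W₁ W₂ W₃ H).card ≤ (crossing V₁ V₂ V₃ H).card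

/-- The edge set of the shadow graph of `H`: pairs `{x,y}` contained in some
hyperedge of `H`. -/
noncomputable def shadowE {n : ℕ} (H : Finset (Edge n)) : Finset (Finset (Fin n)) :=
  (Finset.powersetCard 2 (Finset.univ : Finset (Fin n))).filter fun s =>
    ∃ e ∈ H, s ⊆ (e : Finset (Fin n))

/-- `J`: the induced subgraph on `V₁` of the shadow graph of `H₁`. -/
noncomputable def Jgraph {n : ℕ} (V₁ : Finset (Fin n)) (H : Finset (Edge n)) :
    Finset (Finset (Fin n)) :=
  (shadowE (bigPart V₁ H)).filter fun s => s ⊆ V₁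

/-- Degree of the vertex `x` in a graph given as a finset of (2-element) edges. -/
noncomputable def degIn {n : ℕ} (J : Finset (Finset (Fin n))) (x : Fin n) : ℕ :=
  (J.filter fun s => x ∈ s).card

/-- `d^H_{2,3}(x)`: the number of pairs `(y,z) ∈ V₂ × V₃` with `xyz ∈ H`. -/
noncomputable def d23 {n : ℕ} (H : Finset (Edge n)) (V₂ V₃ : Finset (Fin n)) (x : Fin n) : ℕ :=
  ((V₂ ×ˢ V₃).filter fun q => memH H {x, q.1, q.2}).card

/-- `d_S(x,y)`: the number of vertices `z ∈ S` with `xyz ∈ H`. -/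
noncomputable def codeg {n : ℕ} (H : Finset (Edge n)) (S : Finset (Fin n)) (x y : Fin n) : ℕ :=
  (S.filter fun z => memH H {x, y, z}).card

/-- `L_{2,3}(x,y)`: pairs `(y',z') ∈ V₂ × V₃` such that both `xy'z'` and `yy'z'`
are hyperedges of the sampled hypergraph. -/
noncomputable def L23 {n : ℕ} (ω : Edge n → Bool) (V₂ V₃ : Finset (Fin n)) (x y : Fin n) :
    Finset (Fin n × Fin n) :=
  (V₂ ×ˢ V₃).filter fun q =>
    memH (hedges ω) {x, q.1, q.2} ∧ memH (hedges ω) {y, q.1, q.2}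

/-- `Q(π)`: the pairs `{x,y} ⊆ V₁` with `|L_{2,3}(x,y)| < 0.8 p² n² / 9`. -/
noncomputable def Qset {n : ℕ} (ω : Edge n → Bool) (p : ℝ) (V₁ V₂ V₃ : Finset (Fin n)) :
    Finset (Finset (Fin n)) :=
  (Finset.powersetCard 2 V₁).filter fun s =>
    ∃ x ∈ s, ∃ y ∈ s, x ≠ y ∧
      ((L23 ω V₂ V₃ x y).card : ℝ) < 0.8 * p ^ 2 * (n : ℝ) ^ 2 / 9

/-- The degree `d(v)` of a vertex: the number of hyperedges containing `v`. -/
noncomputable def vdeg {n : ℕ} (ω : Edge n → Bool) (v : Fin n) : ℕ :=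
  ((hedges ω).filter fun e => v ∈ (e : Finset (Fin n))).card

/-- `t(G)`: the number of hyperedges of a maximum tripartite subhypergraph of `G`. -/
noncomputable def tG {n : ℕ} (ω : Edge n → Bool) : ℕ :=
  (((hedges ω).powerset).filter fun H => Tripartite H).sup Finset.card

/-- `G(v,E,A,T) = K(v,E,A,T) ∩ G` where
`K(v,E,A,T) = {xyz : x ∈ A, {y,z} ∈ T, ∃ e ∈ E, x ∈ e, y ∉ e, z ∉ e}`. -/
noncomputable def GvEAT {n : ℕ} (ω : Edge n → Bool) (A : Finset (Fin n))
    (T : Finset (Finset (Fin n))) (E : Finset (Edge n)) : Finset (Edge n) :=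
  (hedges ω).filter fun f => ∃ x ∈ A, ∃ t ∈ T, (f : Finset (Fin n)) = insert x t ∧
    ∃ e ∈ E, x ∈ (e : Finset (Fin n)) ∧ ∀ z ∈ t, z ∉ (e : Finset (Fin n))

/-- `{w₁, w₂, y, z}` spans an `F̂₅` (w.r.t. `H` and the partition `(V₁,V₂,V₃)`):
`w₁yz, w₂yz ∈ G_π` and there exists `e ∈ H` with `w₁, w₂ ∈ e ∩ V₁` and `y, z ∉ e`. -/
def F5hat {n : ℕ} (ω : Edge n → Bool) (H : Finset (Edge n)) (V₁ V₂ V₃ : Finset (Fin n))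
    (w₁ w₂ y z : Fin n) : Prop :=
  memH (crossing V₁ V₂ V₃ (hedges ω)) {w₁, y, z} ∧
  memH (crossing V₁ V₂ V₃ (hedges ω)) {w₂, y, z} ∧
  ∃ e ∈ H, w₁ ∈ (e : Finset (Fin n)) ∧ w₂ ∈ (e : Finset (Fin n)) ∧
    w₁ ∈ V₁ ∧ w₂ ∈ V₁ ∧ y ∉ (e : Finset (Fin n)) ∧ z ∉ (e : Finset (Fin n))

/-- `g(p,s,r,i) = n · C(n,s) · C(n²,r) · (p · C(s,i) · pⁱ)ʳ`. -/
noncomputable def gbound (n : ℕ) (p : ℝ) (s r i : ℕ) : ℝ :=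
  (n : ℝ) * (n.choose s) * ((n ^ 2).choose r) * (p * (s.choose i) * p ^ i) ^ r


open scoped ENNReal


lemma bern_fin (p : ℝ) : IsFiniteMeasure (bern p) := by
  constructor
  simp [bern, smul_eq_mul]

lemma bern_prob (p : ℝ) (h0 : 0 ≤ p) (h1 : p ≤ 1) : IsProbabilityMeasure (bern p) := by
  constructor
  simp [bern, smul_eq_mul]
  rw [← ENNReal.coe_add, ← Real.toNNReal_add h0 (by linarith)]
  norm_num

lemma hypM_prob (n : ℕ) (p : ℝ) (h0 : 0 ≤ p) (h1 : p ≤ 1) : IsProbabilityMeasure (hypM n p) := by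
  haveI := bern_prob p h0 h1
  unfold hypM; infer_instance

lemma bern_true (p : ℝ) : bern p {true} = ENNReal.ofReal p := by
  simp [bern, smul_eq_mul, Measure.dirac_apply', ENNReal.ofReal]

lemma all_meas (n : ℕ) (S : Set (Edge n → Bool)) : MeasurableSet S :=
  S.to_countable.measurableSet

lemma cyl_meas (n : ℕ) (p : ℝ) (h0 : 0 ≤ p) (h1 : p ≤ 1) (S : Finset (Edge n)) :
    hypM n p {ω | ∀ e ∈ S, ω e = true} = ENNReal.ofReal p ^ S.card := by
  haveI := fun (e : Edge n) => bern_fin p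
  haveI := bern_prob p h0 h1
  have : {ω : Edge n → Bool | ∀ e ∈ S, ω e = true}
      = Set.pi Set.univ (fun e => if e ∈ S then {true} else Set.univ) := by
    ext ω
    simp only [Set.mem_pi, Set.mem_univ, Set.mem_setOf_eq, forall_true_left]
    constructor
    · intro h e; split <;> simp_all
    · intro h e he; have := h e; simp [he] at this; exact this
  rw [this]
  unfold hypM
  rw [Measure.pi_pi]
  simp only [apply_ite (bern p), measure_univ, bern_true p]
  rw [Finset.prod_ite_mem Finset.univ S (fun _ => ENNReal.ofReal p)]
  rw [Finset.univ_inter, Finset.prod_const]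

noncomputable def Dset {n : ℕ} (ω : Edge n → Bool) (x₁ x₂ w : Fin n) : Finset (Fin n) :=
  Finset.univ.filter fun z => z ∉ ({x₁, x₂, w} : Finset (Fin n)) ∧
    memH (hedges ω) {x₁, w, z} ∧ memH (hedges ω) {x₂, w, z}

def BadT (n t : ℕ) (x₁ x₂ w : Fin n) : Set (Edge n → Bool) :=
  {ω | (x₁ ≠ x₂ ∧ x₁ ≠ w ∧ x₂ ≠ w) ∧ t ≤ (Dset ω x₁ x₂ w).card}

lemma card_triple {n : ℕ} {a b c : Fin n} (h1 : a ≠ b) (h2 : a ≠ c) (h3 : b ≠ c) :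
    ({a, b, c} : Finset (Fin n)).card = 3 := by
  rw [Finset.card_insert_of_notMem (by simp [h1, h2]),
    Finset.card_insert_of_notMem (by simp [h3]), Finset.card_singleton]

lemma measBadT (n t : ℕ) (p : ℝ) (h0 : 0 ≤ p) (h1 : p ≤ 1) (x₁ x₂ w : Fin n) :
    hypM n p (BadT n t x₁ x₂ w) ≤ (n.choose t : ℝ≥0∞) * ENNReal.ofReal (p ^ (2 * t)) := by
  by_cases hdist : x₁ ≠ x₂ ∧ x₁ ≠ w ∧ x₂ ≠ w
  case neg =>
    have hB : BadT n t x₁ x₂ w = ∅ := by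
      ext ω; simp only [BadT, Set.mem_setOf_eq, Set.mem_empty_iff_false, iff_false]; tauto
    simp [hB]
  obtain ⟨hd12, hd1w, hd2w⟩ := hdist
  set A := (Finset.univ : Finset (Fin n)) \ {x₁, x₂, w} with hA
  set ES : Finset (Fin n) → Finset (Edge n) := fun S => Finset.univ.filter
      (fun e => ∃ z ∈ S, ((e : Finset (Fin n)) = {x₁, w, z} ∨ (e : Finset (Fin n)) = {x₂, w, z}))
    with hES
  have hzA : ∀ z ∈ A, z ≠ x₁ ∧ z ≠ x₂ ∧ z ≠ w := by
    intro z hz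
    rw [hA, Finset.mem_sdiff] at hz
    simp only [Finset.mem_insert, Finset.mem_singleton] at hz
    tauto
  have hsub : BadT n t x₁ x₂ w ⊆
      ⋃ S ∈ Finset.powersetCard t A, {ω : Edge n → Bool | ∀ e ∈ ES S, ω e = true} := by
    rintro ω ⟨-, hcard⟩
    have hDsub : Dset ω x₁ x₂ w ⊆ A := by
      intro z hz
      rw [Dset, Finset.mem_filter] at hz
      exact Finset.mem_sdiff.2 ⟨Finset.mem_univ _, hz.2.1⟩
    obtain ⟨S, hSD, hScard⟩ := Finset.exists_subset_card_eq hcard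
    refine Set.mem_biUnion (Finset.mem_powersetCard.2 ⟨hSD.trans hDsub, hScard⟩) ?_
    intro e he
    rw [hES, Finset.mem_filter] at he
    obtain ⟨-, z, hzS, hor⟩ := he
    have hzD := hSD hzS
    rw [Dset, Finset.mem_filter] at hzD
    obtain ⟨-, -, hm1, hm2⟩ := hzD
    rcases hor with hval | hval
    · obtain ⟨e', he'G, he'v⟩ := hm1
      have he'e : e' = e := Subtype.ext (he'v.trans hval.symm)
      rw [hedges, Finset.mem_filter] at he'G; exact he'e ▸ he'G.2
    · obtain ⟨e', he'G, he'v⟩ := hm2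
      have he'e : e' = e := Subtype.ext (he'v.trans hval.symm)
      rw [hedges, Finset.mem_filter] at he'G; exact he'e ▸ he'G.2
  have hcyl : ∀ S ∈ Finset.powersetCard t A,
      hypM n p {ω : Edge n → Bool | ∀ e ∈ ES S, ω e = true} ≤ ENNReal.ofReal (p ^ (2 * t)) := by
    intro S hS
    rw [Finset.mem_powersetCard] at hS
    obtain ⟨hSA, hScard⟩ := hS
    rw [cyl_meas n p h0 h1 (ES S)]
    have hge : 2 * t ≤ (ES S).card := by
      set g : Fin n × Bool → Finset (Fin n) := fun q =>
        if q.2 then ({x₁, w, q.1} : Finset (Fin n)) else {x₂, w, q.1} with hg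
      have himg : ((S ×ˢ (Finset.univ : Finset Bool)).image g) ⊆
          (ES S).image Subtype.val := by
        intro s hs
        rw [Finset.mem_image] at hs
        obtain ⟨q, hq, rfl⟩ := hs
        rw [Finset.mem_product] at hq
        obtain ⟨hz1, hz2, hzw⟩ := hzA q.1 (hSA hq.1)
        rcases Bool.eq_false_or_eq_true q.2 with hb | hb
        · have h3 : ({x₁, w, q.1} : Finset (Fin n)).card = 3 :=
            card_triple hd1w (Ne.symm hz1) (Ne.symm hzw)
          refine Finset.mem_image.2 ⟨(⟨({x₁, w, q.1} : Finset (Fin n)), h3⟩ : Edge n), ?_, ?_⟩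
          · rw [hES]; simp only [Finset.mem_filter]
            exact ⟨Finset.mem_univ _, q.1, hq.1, Or.inl rfl⟩
          · simp [hg, hb]
        · have h3 : ({x₂, w, q.1} : Finset (Fin n)).card = 3 :=
            card_triple hd2w (Ne.symm hz2) (Ne.symm hzw)
          refine Finset.mem_image.2 ⟨(⟨({x₂, w, q.1} : Finset (Fin n)), h3⟩ : Edge n), ?_, ?_⟩
          · rw [hES]; simp only [Finset.mem_filter]
            exact ⟨Finset.mem_univ _, q.1, hq.1, Or.inr rfl⟩
          · simp [hg, hb]
      have hginj : Set.InjOn g ↑(S ×ˢ (Finset.univ : Finset Bool)) := by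
        intro q hq q' hq' hgq
        rw [Finset.coe_product] at hq hq'
        obtain ⟨hz1, hz2, hzw⟩ := hzA q.1 (hSA hq.1)
        obtain ⟨hz1', hz2', hzw'⟩ := hzA q'.1 (hSA hq'.1)
        rcases Bool.eq_false_or_eq_true q.2 with hb | hb <;>
          rcases Bool.eq_false_or_eq_true q'.2 with hb' | hb'
        · have hgq' : ({x₁, w, q.1} : Finset (Fin n)) = {x₁, w, q'.1} := by
            simpa [hg, hb, hb'] using hgq
          have hm : q.1 ∈ ({x₁, w, q'.1} : Finset (Fin n)) := by rw [← hgq']; simp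
          simp only [Finset.mem_insert, Finset.mem_singleton] at hm
          rcases hm with h | h | h
          · exact absurd h hz1
          · exact absurd h hzw
          · exact Prod.ext h (hb.trans hb'.symm)
        · have hgq' : ({x₁, w, q.1} : Finset (Fin n)) = {x₂, w, q'.1} := by
            simpa [hg, hb, hb'] using hgq
          have hm : x₂ ∈ ({x₁, w, q.1} : Finset (Fin n)) := by rw [hgq']; simp
          simp only [Finset.mem_insert, Finset.mem_singleton] at hm
          rcases hm with h | h | h
          · exact absurd h (Ne.symm hd12)
          · exact absurd h hd2w
          · exact absurd h.symm hz2
        · have hgq' : ({x₂, w, q.1} : Finset (Fin n)) = {x₁, w, q'.1} := by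
            simpa [hg, hb, hb'] using hgq
          have hm : x₂ ∈ ({x₁, w, q'.1} : Finset (Fin n)) := by rw [← hgq']; simp
          simp only [Finset.mem_insert, Finset.mem_singleton] at hm
          rcases hm with h | h | h
          · exact absurd h (Ne.symm hd12)
          · exact absurd h hd2w
          · exact absurd h.symm hz2'
        · have hgq' : ({x₂, w, q.1} : Finset (Fin n)) = {x₂, w, q'.1} := by
            simpa [hg, hb, hb'] using hgq
          have hm : q.1 ∈ ({x₂, w, q'.1} : Finset (Fin n)) := by rw [← hgq']; simp
          simp only [Finset.mem_insert, Finset.mem_singleton] at hm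
          rcases hm with h | h | h
          · exact absurd h hz2
          · exact absurd h hzw
          · exact Prod.ext h (hb.trans hb'.symm)
      have c1 : ((S ×ˢ (Finset.univ : Finset Bool)).image g).card = 2 * t := by
        rw [Finset.card_image_of_injOn hginj, Finset.card_product, hScard]
        simp [Nat.mul_comm]
      have c2 : ((ES S).image Subtype.val).card = (ES S).card :=
        Finset.card_image_of_injOn (Subtype.val_injective.injOn)
      calc 2 * t = ((S ×ˢ (Finset.univ : Finset Bool)).image g).card := c1.symm
        _ ≤ ((ES S).image Subtype.val).card := Finset.card_le_card himg
        _ = (ES S).card := c2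
    calc ENNReal.ofReal p ^ (ES S).card = ENNReal.ofReal (p ^ (ES S).card) := by
          rw [ENNReal.ofReal_pow h0]
      _ ≤ ENNReal.ofReal (p ^ (2 * t)) :=
          ENNReal.ofReal_le_ofReal (pow_le_pow_of_le_one h0 h1 hge)
  calc hypM n p (BadT n t x₁ x₂ w)
      ≤ hypM n p (⋃ S ∈ Finset.powersetCard t A, {ω : Edge n → Bool | ∀ e ∈ ES S, ω e = true}) :=
        measure_mono hsub
    _ ≤ ∑ S ∈ Finset.powersetCard t A, hypM n p {ω : Edge n → Bool | ∀ e ∈ ES S, ω e = true} :=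
        measure_biUnion_finset_le _ _
    _ ≤ ∑ _S ∈ Finset.powersetCard t A, ENNReal.ofReal (p ^ (2 * t)) :=
        Finset.sum_le_sum hcyl
    _ = ((A.card.choose t : ℕ) : ℝ≥0∞) * ENNReal.ofReal (p ^ (2 * t)) := by
        rw [Finset.sum_const, Finset.card_powersetCard, nsmul_eq_mul]
    _ ≤ (n.choose t : ℝ≥0∞) * ENNReal.ofReal (p ^ (2 * t)) := by
        apply mul_le_mul_left
        exact_mod_cast Nat.choose_le_choose t (le_trans (Finset.card_le_univ A) (by simp))

def Fset (n t : ℕ) : Set (Edge n → Bool) :=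
  ⋃ q ∈ ((Finset.univ : Finset (Fin n × Fin n × Fin n)) : Set (Fin n × Fin n × Fin n)),
    BadT n t q.1 q.2.1 q.2.2

lemma measFset (n t : ℕ) (p : ℝ) (h0 : 0 ≤ p) (h1 : p ≤ 1) :
    hypM n p (Fset n t) ≤
      ((n : ℝ≥0∞)) ^ 3 * (n.choose t : ℝ≥0∞) * ENNReal.ofReal (p ^ (2 * t)) := by
  calc hypM n p (Fset n t)
      ≤ ∑ q ∈ (Finset.univ : Finset (Fin n × Fin n × Fin n)),
          hypM n p (BadT n t q.1 q.2.1 q.2.2) := measure_biUnion_finset_le _ _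
    _ ≤ ∑ _q ∈ (Finset.univ : Finset (Fin n × Fin n × Fin n)),
          (n.choose t : ℝ≥0∞) * ENNReal.ofReal (p ^ (2 * t)) :=
        Finset.sum_le_sum (fun q _ => measBadT n t p h0 h1 _ _ _)
    _ = ((Fintype.card (Fin n × Fin n × Fin n) : ℕ) : ℝ≥0∞)
          * ((n.choose t : ℝ≥0∞) * ENNReal.ofReal (p ^ (2 * t))) := by
        rw [Finset.sum_const, Finset.card_univ, nsmul_eq_mul]
    _ = ((n : ℝ≥0∞)) ^ 3 * (n.choose t : ℝ≥0∞) * ENNReal.ofReal (p ^ (2 * t)) := by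
        rw [Fintype.card_prod, Fintype.card_prod, Fintype.card_fin]
        push_cast
        ring


lemma tail_real (n : ℕ) (r : ℝ) (hn : 1000 ≤ n) (hr0 : 0 < r) (hr1 : r ≤ 1)
    (hlb : 40 * Real.sqrt (Real.log n) / n < r) :
    (n : ℝ) ^ 3 * ((n.choose (⌊r ^ 2 * (n : ℝ) ^ 2 / 180⌋₊ + 1)) : ℝ)
      * r ^ (2 * (⌊r ^ 2 * (n : ℝ) ^ 2 / 180⌋₊ + 1)) ≤ 1 / n := by
  set t : ℕ := ⌊r ^ 2 * (n : ℝ) ^ 2 / 180⌋₊ + 1 with htdef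
  have hnn : (1000 : ℝ) ≤ n := by exact_mod_cast hn
  have hn0 : (0 : ℝ) < n := by linarith
  have hln0 : 0 ≤ Real.log n := Real.log_nonneg (by linarith)
  have hsq : 1600 * Real.log n ≤ r ^ 2 * (n : ℝ) ^ 2 := by
    have h1 : 40 * Real.sqrt (Real.log n) < r * n := by
      rw [div_lt_iff₀ hn0] at hlb; linarith
    have h2 : (40 * Real.sqrt (Real.log n)) ^ 2 ≤ (r * n) ^ 2 :=
      pow_le_pow_left₀ (by positivity) h1.le 2
    calc 1600 * Real.log n = (40 * Real.sqrt (Real.log n)) ^ 2 := by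
          rw [mul_pow, Real.sq_sqrt hln0]; ring
      _ ≤ (r * n) ^ 2 := h2
      _ = r ^ 2 * (n : ℝ) ^ 2 := by ring
  have ht1 : r ^ 2 * (n : ℝ) ^ 2 / 180 < (t : ℝ) := by
    rw [htdef]; push_cast; exact Nat.lt_floor_add_one _
  have htpos : (0 : ℝ) < t := lt_of_le_of_lt (by positivity) ht1
  have htln : 1600 * Real.log n / 180 ≤ (t : ℝ) := by linarith
  have hc1 : ((n.choose t) : ℝ) ≤ (n : ℝ) ^ t / (t.factorial : ℝ) := Nat.choose_le_pow_div t n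
  have hfact : (t : ℝ) ^ t / (t.factorial : ℝ) ≤ Real.exp t := by
    refine le_trans ?_ (Real.sum_le_exp_of_nonneg htpos.le (t + 1))
    exact Finset.single_le_sum (f := fun i => (t : ℝ) ^ i / (i.factorial : ℝ))
      (fun i _ => by positivity) (Finset.self_mem_range_succ t)
  have hfact0 : (0 : ℝ) < (t.factorial : ℝ) := by exact_mod_cast t.factorial_pos
  have hnr : (n : ℝ) * r ^ 2 ≤ 180 * t / n := by
    rw [le_div_iff₀ hn0]
    nlinarith
  have key : ((n.choose t) : ℝ) * r ^ (2 * t) ≤ ((1 : ℝ) / 2) ^ t := by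
    have e1 : r ^ (2 * t) = (r ^ 2) ^ t := by rw [pow_mul]
    have hexp1 : Real.exp (t : ℝ) = Real.exp 1 ^ t := by
      rw [← Real.exp_nat_mul]; norm_num
    have h180 : 180 * Real.exp 1 / (n : ℝ) ≤ 1 / 2 := by
      rw [div_le_div_iff₀ hn0 (by norm_num : (0:ℝ) < 2)]
      nlinarith [Real.exp_one_lt_d9]
    calc ((n.choose t) : ℝ) * r ^ (2 * t)
        ≤ ((n : ℝ) ^ t / (t.factorial : ℝ)) * (r ^ 2) ^ t := by
          rw [e1]; exact mul_le_mul_of_nonneg_right hc1 (by positivity)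
      _ = ((n : ℝ) * r ^ 2) ^ t / (t.factorial : ℝ) := by rw [mul_pow]; ring
      _ ≤ (180 * t / n) ^ t / (t.factorial : ℝ) := by
          gcongr
      _ = (180 / (n:ℝ)) ^ t * ((t : ℝ) ^ t / (t.factorial : ℝ)) := by
          have hmp : (180 * (t:ℝ) / n) ^ t = (180 / (n:ℝ)) ^ t * (t:ℝ) ^ t := by
            rw [← mul_pow]; congr 1; ring
          rw [hmp, mul_div_assoc]
      _ ≤ (180 / (n:ℝ)) ^ t * Real.exp t := mul_le_mul_of_nonneg_left hfact (by positivity)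
      _ = (180 * Real.exp 1 / n) ^ t := by
          rw [hexp1, ← mul_pow]
          congr 1
          ring
      _ ≤ ((1 : ℝ) / 2) ^ t := pow_le_pow_left₀ (by positivity) h180 t
  have h2t : (n : ℝ) ^ 4 ≤ 2 ^ t := by
    have hl2 : (0.6931471803 : ℝ) < Real.log 2 := Real.log_two_gt_d9
    have hl2n : (0:ℝ) ≤ Real.log 2 := by linarith
    have hgoal : (4:ℝ) * Real.log n ≤ (t:ℝ) * Real.log 2 := by
      nlinarith [mul_le_mul_of_nonneg_right htln hl2n]
    have e1 : (n : ℝ) ^ 4 = Real.exp ((4 : ℕ) * Real.log n) := by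
      rw [Real.exp_nat_mul, Real.exp_log hn0]
    have e2 : (2 : ℝ) ^ t = Real.exp ((t : ℕ) * Real.log 2) := by
      rw [Real.exp_nat_mul, Real.exp_log (by norm_num : (0:ℝ) < 2)]
    rw [e1, e2]
    apply Real.exp_le_exp.2
    have h4 : ((4:ℕ):ℝ) = 4 := by norm_num
    rw [h4]
    exact hgoal
  have ha : (0:ℝ) < ((1:ℝ)/2)^t := by positivity
  have hid : ((1:ℝ)/2)^t * 2^t = 1 := by rw [← mul_pow]; norm_num
  have h1 : (n:ℝ)^4 * ((1:ℝ)/2)^t ≤ 1 := by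
    nlinarith [mul_le_mul_of_nonneg_right h2t ha.le]
  calc (n : ℝ) ^ 3 * ((n.choose t) : ℝ) * r ^ (2 * t)
      ≤ (n : ℝ) ^ 3 * ((1 : ℝ) / 2) ^ t := by
        rw [mul_assoc]
        exact mul_le_mul_of_nonneg_left key (by positivity)
    _ ≤ 1 / (n : ℝ) := by
        rw [le_div_iff₀ hn0]
        nlinarith [h1]

lemma det_lemma {n : ℕ} (p : ℝ) (ω : Edge n → Bool)
    (hD : ∀ x₁ x₂ w : Fin n, x₁ ≠ x₂ → x₁ ≠ w → x₂ ≠ w →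
      ((Dset ω x₁ x₂ w).card : ℝ) ≤ p ^ 2 * (n : ℝ) ^ 2 / 180) :
    ∀ H ⊆ hedges ω, F5Free H →
      ∀ V₁ V₂ V₃ : Finset (Fin n), MaximizesCrossing H V₁ V₂ V₃ → Balanced3 V₁ V₂ V₃ →
      ∀ x₁ x₂ : Fin n, x₁ ≠ x₂ →
        ({x₁, x₂} : Finset (Fin n)) ∈ Jgraph V₁ H →
        ({x₁, x₂} : Finset (Fin n)) ∉ Qset ω p V₁ V₂ V₃ →
        p ^ 2 * (n : ℝ) ^ 2 / 12 ≤
          (((V₂ ×ˢ V₃).filter fun q => F5hat ω H V₁ V₂ V₃ x₁ x₂ q.1 q.2).card : ℝ) := by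
  intro H hHG hF5 V₁ V₂ V₃ hmax hbal x₁ x₂ hne hJ hQ
  obtain ⟨d12, d13, d23, -⟩ := hmax.1
  -- unpack J-membership
  rw [Jgraph, Finset.mem_filter] at hJ
  obtain ⟨hsh, hsub⟩ := hJ
  rw [shadowE, Finset.mem_filter] at hsh
  obtain ⟨-, e, heB, hse⟩ := hsh
  have heH : e ∈ H := (Finset.mem_filter.1 heB).1
  have hx1e : x₁ ∈ (e : Finset (Fin n)) := hse (by simp)
  have hx2e : x₂ ∈ (e : Finset (Fin n)) := hse (by simp)
  have hx1V : x₁ ∈ V₁ := hsub (by simp)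
  have hx2V : x₂ ∈ V₁ := hsub (by simp)
  -- third vertex w
  have hcard2 : ({x₁, x₂} : Finset (Fin n)).card = 2 := Finset.card_pair hne
  have hsd : ((e : Finset (Fin n)) \ {x₁, x₂}).card = 1 := by
    rw [Finset.card_sdiff_of_subset hse, e.2, hcard2]
  obtain ⟨w, hw⟩ := Finset.card_eq_one.1 hsd
  have hwmem : w ∈ (e : Finset (Fin n)) \ {x₁, x₂} := hw ▸ Finset.mem_singleton_self w
  have hwne : x₁ ≠ w ∧ x₂ ≠ w := by
    have := (Finset.mem_sdiff.1 hwmem).2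
    simp only [Finset.mem_insert, Finset.mem_singleton] at this
    push_neg at this
    exact ⟨Ne.symm this.1, Ne.symm this.2⟩
  have hw3 : ∀ v ∈ (e : Finset (Fin n)), v = x₁ ∨ v = x₂ ∨ v = w := by
    intro v hv
    by_cases h : v ∈ ({x₁, x₂} : Finset (Fin n))
    · simp at h; tauto
    · right; right
      have : v ∈ (e : Finset (Fin n)) \ {x₁, x₂} := Finset.mem_sdiff.2 ⟨hv, h⟩
      rw [hw] at this; simpa using this
  -- Q-set: L23 is large
  have hmemP : ({x₁, x₂} : Finset (Fin n)) ∈ Finset.powersetCard 2 V₁ :=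
    Finset.mem_powersetCard.2 ⟨hsub, hcard2⟩
  have hL : 0.8 * p ^ 2 * (n : ℝ) ^ 2 / 9 ≤ ((L23 ω V₂ V₃ x₁ x₂).card : ℝ) := by
    by_contra hlt
    exact hQ (Finset.mem_filter.2 ⟨hmemP, x₁, by simp, x₂, by simp, hne, not_le.1 hlt⟩)
  -- good pairs
  set L := L23 ω V₂ V₃ x₁ x₂ with hLdef
  set T := (V₂ ×ˢ V₃).filter fun q => F5hat ω H V₁ V₂ V₃ x₁ x₂ q.1 q.2 with hTdef
  have hLmem : ∀ q ∈ L, q.1 ∈ V₂ ∧ q.2 ∈ V₃ ∧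
      memH (hedges ω) {x₁, q.1, q.2} ∧ memH (hedges ω) {x₂, q.1, q.2} := by
    intro q hq
    rw [hLdef, L23, Finset.mem_filter, Finset.mem_product] at hq
    exact ⟨hq.1.1, hq.1.2, hq.2.1, hq.2.2⟩
  have hcross : ∀ x ∈ V₁, ∀ y ∈ V₂, ∀ z ∈ V₃, memH (hedges ω) {x, y, z} →
      memH (crossing V₁ V₂ V₃ (hedges ω)) {x, y, z} := by
    intro x hx y hy z hz ⟨e', he'G, he'v⟩
    refine ⟨e', Finset.mem_filter.2 ⟨he'G, ?_, ?_, ?_⟩, he'v⟩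
    · have : (e' : Finset (Fin n)) ∩ V₁ = {x} := by
        ext a
        simp only [Finset.mem_inter, he'v, Finset.mem_insert, Finset.mem_singleton]
        constructor
        · rintro ⟨(rfl | rfl | rfl), ha⟩
          · rfl
          · exact absurd ha (Finset.disjoint_right.1 d12 hy)
          · exact absurd ha (Finset.disjoint_right.1 d13 hz)
        · rintro rfl; exact ⟨Or.inl rfl, hx⟩
      rw [this, Finset.card_singleton]
    · have : (e' : Finset (Fin n)) ∩ V₂ = {y} := by
        ext a
        simp only [Finset.mem_inter, he'v, Finset.mem_insert, Finset.mem_singleton]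
        constructor
        · rintro ⟨(rfl | rfl | rfl), ha⟩
          · exact absurd ha (Finset.disjoint_left.1 d12 hx)
          · rfl
          · exact absurd ha (Finset.disjoint_right.1 d23 hz)
        · rintro rfl; exact ⟨Or.inr (Or.inl rfl), hy⟩
      rw [this, Finset.card_singleton]
    · have : (e' : Finset (Fin n)) ∩ V₃ = {z} := by
        ext a
        simp only [Finset.mem_inter, he'v, Finset.mem_insert, Finset.mem_singleton]
        constructor
        · rintro ⟨(rfl | rfl | rfl), ha⟩
          · exact absurd ha (Finset.disjoint_left.1 d13 hx)
          · exact absurd ha (Finset.disjoint_left.1 d23 hy)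
          · rfl
        · rintro rfl; exact ⟨Or.inr (Or.inr rfl), hz⟩
      rw [this, Finset.card_singleton]
  have hgoodT : L.filter (fun q => q.1 ≠ w ∧ q.2 ≠ w) ⊆ T := by
    intro q hq
    rw [Finset.mem_filter] at hq
    obtain ⟨hqL, hq1, hq2⟩ := hq
    obtain ⟨hy2, hz3, hm1, hm2⟩ := hLmem q hqL
    rw [hTdef, Finset.mem_filter, Finset.mem_product]
    refine ⟨⟨hy2, hz3⟩, hcross x₁ hx1V q.1 hy2 q.2 hz3 hm1,
      hcross x₂ hx2V q.1 hy2 q.2 hz3 hm2, e, heH, hx1e, hx2e, hx1V, hx2V, ?_, ?_⟩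
    · intro hy
      rcases hw3 _ hy with rfl | rfl | rfl
      · exact Finset.disjoint_left.1 d12 hx1V hy2
      · exact Finset.disjoint_left.1 d12 hx2V hy2
      · exact hq1 rfl
    · intro hz
      rcases hw3 _ hz with rfl | rfl | rfl
      · exact Finset.disjoint_left.1 d13 hx1V hz3
      · exact Finset.disjoint_left.1 d13 hx2V hz3
      · exact hq2 rfl
  -- bad pairs inject into Dset
  have hbad : (L.filter (fun q => ¬(q.1 ≠ w ∧ q.2 ≠ w))).card ≤ (Dset ω x₁ x₂ w).card := by
    apply Finset.card_le_card_of_injOn (fun q => if q.1 = w then q.2 else q.1)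
    · intro q hq
      rw [Finset.mem_coe, Finset.mem_filter] at hq
      obtain ⟨hqL, hqw⟩ := hq
      obtain ⟨hy2, hz3, hm1, hm2⟩ := hLmem q hqL
      push_neg at hqw
      rw [Finset.mem_coe, Dset, Finset.mem_filter]
      by_cases h1 : q.1 = w
      · simp only [h1, if_pos]
        refine ⟨Finset.mem_univ _, ?_, ?_, ?_⟩
        · simp only [Finset.mem_insert, Finset.mem_singleton]
          push_neg
          refine ⟨?_, ?_, ?_⟩
          · rintro rfl; exact Finset.disjoint_left.1 d13 hx1V hz3
          · rintro rfl; exact Finset.disjoint_left.1 d13 hx2V hz3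
          · rintro rfl; exact Finset.disjoint_left.1 d23 (h1 ▸ hy2) hz3
        · rwa [← h1]
        · rwa [← h1]
      · have h2 : q.2 = w := by tauto
        simp only [if_neg h1]
        refine ⟨Finset.mem_univ _, ?_, ?_, ?_⟩
        · simp only [Finset.mem_insert, Finset.mem_singleton]
          push_neg
          refine ⟨?_, ?_, ?_⟩
          · rintro rfl; exact Finset.disjoint_left.1 d12 hx1V hy2
          · rintro rfl; exact Finset.disjoint_left.1 d12 hx2V hy2
          · rintro rfl; exact Finset.disjoint_left.1 d23 hy2 (h2 ▸ hz3)
        · have hEq : ({x₁, w, q.1} : Finset (Fin n)) = {x₁, q.1, q.2} := by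
            rw [h2]; ext a; simp only [Finset.mem_insert, Finset.mem_singleton]; tauto
          rw [hEq]; exact hm1
        · have hEq : ({x₂, w, q.1} : Finset (Fin n)) = {x₂, q.1, q.2} := by
            rw [h2]; ext a; simp only [Finset.mem_insert, Finset.mem_singleton]; tauto
          rw [hEq]; exact hm2
    · intro q hq q' hq' hfe
      simp only [Finset.coe_filter, Set.mem_setOf_eq] at hq hq'
      obtain ⟨hqL, hqw⟩ := hq
      obtain ⟨hq'L, hq'w⟩ := hq'
      push_neg at hqw hq'w
      obtain ⟨hy2, hz3, -, -⟩ := hLmem q hqL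
      obtain ⟨hy2', hz3', -, -⟩ := hLmem q' hq'L
      by_cases h1 : q.1 = w <;> by_cases h1' : q'.1 = w
      · simp only [h1, h1', if_pos] at hfe
        exact Prod.ext (h1.trans h1'.symm) hfe
      · have hfe' : q.2 = q'.1 := by simpa [h1, h1'] using hfe
        have : q'.1 ∈ V₃ := hfe' ▸ hz3
        exact (Finset.disjoint_left.1 d23 hy2' this).elim
      · have hfe' : q.1 = q'.2 := by simpa [h1, h1'] using hfe
        have : q.1 ∈ V₃ := hfe'.symm ▸ hz3'
        exact (Finset.disjoint_left.1 d23 hy2 this).elim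
      · simp only [if_neg h1, if_neg h1'] at hfe
        exact Prod.ext hfe ((hqw h1).trans (hq'w h1').symm)
  -- counting
  have hsplit : (L.filter (fun q => q.1 ≠ w ∧ q.2 ≠ w)).card
      + (L.filter (fun q => ¬(q.1 ≠ w ∧ q.2 ≠ w))).card = L.card :=
    Finset.card_filter_add_card_filter_not _
  have hTg : (L.filter (fun q => q.1 ≠ w ∧ q.2 ≠ w)).card ≤ T.card :=
    Finset.card_le_card hgoodT
  have hDb := hD x₁ x₂ w hne hwne.1 hwne.2
  have c1 : ((L.filter (fun q => q.1 ≠ w ∧ q.2 ≠ w)).card : ℝ)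
      + ((L.filter (fun q => ¬(q.1 ≠ w ∧ q.2 ≠ w))).card : ℝ) = (L.card : ℝ) := by
    exact_mod_cast congrArg (Nat.cast : ℕ → ℝ) hsplit
  have c2 : ((L.filter (fun q => q.1 ≠ w ∧ q.2 ≠ w)).card : ℝ) ≤ (T.card : ℝ) := by
    exact_mod_cast hTg
  have c3 : ((L.filter (fun q => ¬(q.1 ≠ w ∧ q.2 ≠ w))).card : ℝ)
      ≤ ((Dset ω x₁ x₂ w).card : ℝ) := by exact_mod_cast hbad
  linarith

theorem stmt_10 :
    ∃ C : ℝ, 0 < C ∧ ∀ p : ℕ → ℝ,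
      (∀ n : ℕ, p n ≤ 1) →
      (∀ n : ℕ, C * Real.sqrt (Real.log n) / n < p n) →
      Tendsto (fun n => hypM n (p n)
        {ω : Edge n → Bool | ∀ H ⊆ hedges ω, F5Free H →
          ∀ V₁ V₂ V₃ : Finset (Fin n), MaximizesCrossing H V₁ V₂ V₃ →
            Balanced3 V₁ V₂ V₃ →
          ∀ x₁ x₂ : Fin n, x₁ ≠ x₂ →
            ({x₁, x₂} : Finset (Fin n)) ∈ Jgraph V₁ H →
            ({x₁, x₂} : Finset (Fin n)) ∉ Qset ω (p n) V₁ V₂ V₃ →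
            p n ^ 2 * (n : ℝ) ^ 2 / 12 ≤
              (((V₂ ×ˢ V₃).filter fun q =>
                F5hat ω H V₁ V₂ V₃ x₁ x₂ q.1 q.2).card : ℝ)})
        atTop (nhds 1) := by
  refine ⟨40, by norm_num, ?_⟩
  intro p hp1 hplb
  have hp0 : ∀ n : ℕ, 0 < p n := by
    intro n
    refine lt_of_le_of_lt ?_ (hplb n)
    positivity
  have hPM : ∀ n : ℕ, IsProbabilityMeasure (hypM n (p n)) :=
    fun n => hypM_prob n (p n) (hp0 n).le (hp1 n)
  set t : ℕ → ℕ := fun n => ⌊(p n) ^ 2 * (n : ℝ) ^ 2 / 180⌋₊ + 1 with htdef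
  -- the good event contains the complement of the bad union
  have hsub : ∀ n : ℕ, (Fset n (t n))ᶜ ⊆
      {ω : Edge n → Bool | ∀ H ⊆ hedges ω, F5Free H →
        ∀ V₁ V₂ V₃ : Finset (Fin n), MaximizesCrossing H V₁ V₂ V₃ →
          Balanced3 V₁ V₂ V₃ →
        ∀ x₁ x₂ : Fin n, x₁ ≠ x₂ →
          ({x₁, x₂} : Finset (Fin n)) ∈ Jgraph V₁ H →
          ({x₁, x₂} : Finset (Fin n)) ∉ Qset ω (p n) V₁ V₂ V₃ →
          p n ^ 2 * (n : ℝ) ^ 2 / 12 ≤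
            (((V₂ ×ˢ V₃).filter fun q =>
              F5hat ω H V₁ V₂ V₃ x₁ x₂ q.1 q.2).card : ℝ)} := by
    intro n ω hω
    have hDall : ∀ x₁ x₂ w : Fin n, x₁ ≠ x₂ → x₁ ≠ w → x₂ ≠ w →
        ((Dset ω x₁ x₂ w).card : ℝ) ≤ (p n) ^ 2 * (n : ℝ) ^ 2 / 180 := by
      intro x₁ x₂ w h1 h2 h3
      have hnot : ω ∉ BadT n (t n) x₁ x₂ w := by
        intro hmem
        exact hω (Set.mem_biUnion (Finset.mem_coe.2
          (Finset.mem_univ ((x₁, x₂, w) : Fin n × Fin n × Fin n))) hmem)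
      rw [BadT, Set.mem_setOf_eq] at hnot
      have hlt : (Dset ω x₁ x₂ w).card < t n := by
        by_contra hge
        exact hnot ⟨⟨h1, h2, h3⟩, not_lt.1 hge⟩
      have hle : (Dset ω x₁ x₂ w).card ≤ ⌊(p n) ^ 2 * (n : ℝ) ^ 2 / 180⌋₊ := by
        have ht : t n = ⌊(p n) ^ 2 * (n : ℝ) ^ 2 / 180⌋₊ + 1 := by rw [htdef]
        omega
      calc ((Dset ω x₁ x₂ w).card : ℝ) ≤ (⌊(p n) ^ 2 * (n : ℝ) ^ 2 / 180⌋₊ : ℝ) := by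
            exact_mod_cast hle
        _ ≤ (p n) ^ 2 * (n : ℝ) ^ 2 / 180 := Nat.floor_le (by positivity)
    exact det_lemma (p n) ω hDall
  -- the bad union has small probability
  have hF0 : Tendsto (fun n => hypM n (p n) (Fset n (t n))) atTop (nhds 0) := by
    have hb0 : Tendsto (fun n : ℕ => ENNReal.ofReal (1 / (n : ℝ))) atTop (nhds 0) := by
      have := ENNReal.tendsto_ofReal (tendsto_one_div_atTop_nhds_zero_nat)
      simpa using this
    refine tendsto_of_tendsto_of_tendsto_of_le_of_le' tendsto_const_nhds hb0
      (Eventually.of_forall (fun n => zero_le)) ?_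
    rw [eventually_atTop]
    refine ⟨1000, fun n hn => ?_⟩
    have h0 : (0 : ℝ) ≤ p n := (hp0 n).le
    calc hypM n (p n) (Fset n (t n))
        ≤ ((n : ℝ≥0∞)) ^ 3 * (n.choose (t n) : ℝ≥0∞) * ENNReal.ofReal ((p n) ^ (2 * t n)) :=
          measFset n (t n) (p n) h0 (hp1 n)
      _ = ENNReal.ofReal ((n : ℝ) ^ 3 * (n.choose (t n) : ℝ) * (p n) ^ (2 * t n)) := by
          rw [ENNReal.ofReal_mul (by positivity), ENNReal.ofReal_mul (by positivity)]
          congr 1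
          congr 1
          · rw [← ENNReal.ofReal_natCast n, ← ENNReal.ofReal_pow (by positivity)]
          · rw [ENNReal.ofReal_natCast]
      _ ≤ ENNReal.ofReal (1 / (n : ℝ)) := by
          apply ENNReal.ofReal_le_ofReal
          exact tail_real n (p n) hn (hp0 n) (hp1 n) (hplb n)
  -- squeeze
  have hlow : Tendsto (fun n => 1 - hypM n (p n) (Fset n (t n))) atTop (nhds 1) := by
    have := ENNReal.Tendsto.sub (tendsto_const_nhds (x := (1 : ℝ≥0∞))) hF0
      (Or.inl ENNReal.one_ne_top)
    simpa using this
  refine tendsto_of_tendsto_of_tendsto_of_le_of_le' hlow tendsto_const_nhds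
    (Eventually.of_forall (fun n => ?_)) (Eventually.of_forall (fun n => ?_))
  · haveI := hPM n
    calc 1 - hypM n (p n) (Fset n (t n))
        = hypM n (p n) (Fset n (t n))ᶜ := by
          rw [measure_compl (all_meas n _) (measure_ne_top _ _), measure_univ]
      _ ≤ hypM n (p n) _ := measure_mono (hsub n)
  · haveI := hPM n
    exact prob_le_one
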